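/- Let κ₀, θ∞ ∈ ℂ, let U ⊆ ℂ be a nonempty open connected set, and let f, g : U → ℂ be differentiable functions with f(t) ≠ 0 for all t ∈ U that solve the Okamoto Hamiltonian system for P_IV: f'(t) = 4f(t)g(t) − f(t)² − 2t·f(t) − 2κ₀ and g'(t) = −2g(t)² + 2f(t)g(t) + 2t·g(t) − θ∞ on U. Then f is twice differentiable on U and satisfies the fourth Painlevé equation f'' = (f')²/(2f) + (3/2)f³ + 4t·f² + 2(t² − α)f + β/f on U with parameters α = 1 + 2θ∞ − κ₀ and β = −2κ₀². -/

import Mathlib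

open Complex

/-- a solution `(f, g)` of the Okamoto Hamiltonian system for P_IV with
parameters `κ₀, θoo` (with `f` nonvanishing) yields a solution `f` of the fourth
Painlevé equation with parameters `α = 1 + 2θ∞ − κ₀`, `β = −2κ₀²`. -/
theorem okamoto_hamiltonian_system_gives_PIV
    (κ₀ θoo : ℂ) (U : Set ℂ)
    (hUo : IsOpen U) (hUne : U.Nonempty) (hUc : IsPreconnected U)
    (f g : ℂ → ℂ)
    (hf0 : ∀ t ∈ U, f t ≠ 0)
    (hf : ∀ t ∈ U, HasDerivAt f (4 * f t * g t - (f t) ^ 2 - 2 * t * f t - 2 * κ₀) t)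
    (hg : ∀ t ∈ U, HasDerivAt g (-2 * (g t) ^ 2 + 2 * f t * g t + 2 * t * g t - θoo) t)
    (α β : ℂ) (hα : α = 1 + 2 * θoo - κ₀) (hβ : β = -2 * κ₀ ^ 2) :
    ∀ t ∈ U, DifferentiableAt ℂ f t ∧ DifferentiableAt ℂ (deriv f) t ∧
      deriv (deriv f) t =
        (deriv f t) ^ 2 / (2 * f t) + 3 / 2 * (f t) ^ 3 + 4 * t * (f t) ^ 2
          + 2 * (t ^ 2 - α) * f t + β / f t := by
  intro t ht
  set a := 4 * f t * g t - (f t) ^ 2 - 2 * t * f t - 2 * κ₀ with ha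
  set b := -2 * (g t) ^ 2 + 2 * f t * g t + 2 * t * g t - θoo with hb
  have h1 : HasDerivAt f a t := hf t ht
  have h2 : HasDerivAt g b t := hg t ht
  have hF : HasDerivAt (fun s => 4 * f s * g s - (f s) ^ 2 - 2 * s * f s - 2 * κ₀)
      (4 * a * g t + 4 * f t * b - 2 * f t * a - (2 * f t + 2 * t * a) - 0) t := by
    have A : HasDerivAt (fun s => 4 * f s * g s) (4 * a * g t + 4 * f t * b) t := by
      have := ((h1.const_mul (4:ℂ)).fun_mul h2)
      simpa [mul_comm, mul_assoc, mul_left_comm] using this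
    have B : HasDerivAt (fun s => (f s) ^ 2) (2 * f t * a) t := by
      have := h1.fun_pow 2
      simpa [mul_comm, mul_assoc] using this
    have C : HasDerivAt (fun s => 2 * s * f s) (2 * f t + 2 * t * a) t := by
      have := ((hasDerivAt_id t).const_mul (2:ℂ)).fun_mul h1
      simpa [mul_comm, mul_assoc] using this
    exact ((A.sub B).sub C).sub (hasDerivAt_const t (2 * κ₀))
  have hev : deriv f =ᶠ[nhds t] (fun s => 4 * f s * g s - (f s) ^ 2 - 2 * s * f s - 2 * κ₀) :=
    Filter.eventuallyEq_of_mem (hUo.mem_nhds ht) (fun s hs => (hf s hs).deriv)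
  have h2' : HasDerivAt (deriv f)
      (4 * a * g t + 4 * f t * b - 2 * f t * a - (2 * f t + 2 * t * a) - 0) t :=
    hF.congr_of_eventuallyEq hev
  refine ⟨h1.differentiableAt, h2'.differentiableAt, ?_⟩
  rw [h2'.deriv, h1.deriv]
  have hfne := hf0 t ht
  subst hα hβ
  field_simp [ha, hb]
  ring
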